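/- arXiv:2203.15212 — 2 statements merged into one kernel-verified Lean document; each statement's English description precedes it below -/
import Mathlib

section
/- (Theorem 1, existence form.) There exists a weight function ω* supported on P that minimizes RE_1 over all weight functions supported on P and satisfies ω*_{XY}/Π_{XY} ∈ {0, 1} for every superedge {X,Y} ∈ P; concretely, the weight function defined by ω*_{XY} = Π_{XY} if Π_{XY} < 2·E_{XY} and ω*_{XY} = 0 otherwise satisfies RE_1(ω*) ≤ RE_1(ω) for every weight function ω supported on P. -/
open scoped Classical

/-- `PiCount c z` is the number `Π_z` of unordered pairs `{i, j}` of distinct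
nodes with `{c i, c j} = z` (computed as half the number of ordered pairs). -/
noncomputable def PiCount {V S : Type*} [Fintype V] (c : V → S) (z : Sym2 S) : ℝ :=
  ((Finset.univ.offDiag.filter
      (fun p : V × V => Sym2.mk (c p.1) (c p.2) = z)).card : ℝ) / 2

/-- `ECount A c z` is the number `E_z` of unordered pairs `{i, j}` of distinct
nodes with `{c i, c j} = z` and `A i j = 1` (half the number of ordered pairs). -/
noncomputable def ECount {V S : Type*} [Fintype V] (A : V → V → ℝ) (c : V → S)
    (z : Sym2 S) : ℝ :=
  ((Finset.univ.offDiag.filter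
      (fun p : V × V => Sym2.mk (c p.1) (c p.2) = z ∧ A p.1 p.2 = 1)).card : ℝ) / 2

/-- The matrix reconstructed from the weighted summary graph `(P, w)`:
`A'_{ij} = w_{c i, c j} / Π_{c i, c j}` if `i ≠ j` and `{c i, c j} ∈ P`, else `0`. -/
noncomputable def reconW {V S : Type*} [Fintype V] (c : V → S) (P : Finset (Sym2 S))
    (w : Sym2 S → ℝ) (i j : V) : ℝ :=
  if i ≠ j ∧ Sym2.mk (c i) (c j) ∈ P then
    w (Sym2.mk (c i) (c j)) / PiCount c (Sym2.mk (c i) (c j)) else 0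

/-- The `L1` reconstruction error of the weighted summary graph `(P, w)`:
the sum of `|A i j − A' i j|` over unordered pairs of distinct nodes
(computed as half the sum over ordered pairs). -/
noncomputable def RE1 {V S : Type*} [Fintype V] (A : V → V → ℝ) (c : V → S)
    (P : Finset (Sym2 S)) (w : Sym2 S → ℝ) : ℝ :=
  (∑ p ∈ Finset.univ.offDiag, |A p.1 p.2 - reconW c P w p.1 p.2|) / 2

/-- The matrix reconstructed from the unweighted summary graph `P'`:
`Ǎ_{ij} = 1` if `i ≠ j` and `{c i, c j} ∈ P'`, else `0`. -/
noncomputable def reconU {V S : Type*} (c : V → S) (P' : Finset (Sym2 S))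
    (i j : V) : ℝ :=
  if i ≠ j ∧ Sym2.mk (c i) (c j) ∈ P' then 1 else 0

/-- The `L1` reconstruction error of the unweighted summary graph `P'`. -/
noncomputable def RE1U {V S : Type*} [Fintype V] (A : V → V → ℝ) (c : V → S)
    (P' : Finset (Sym2 S)) : ℝ :=
  (∑ p ∈ Finset.univ.offDiag, |A p.1 p.2 - reconU c P' p.1 p.2|) / 2

/-- The weight function assigning `Π_z` to `z` when `Π_z < 2·E_z` and `0`
otherwise. -/
noncomputable def optW {V S : Type*} [Fintype V] (A : V → V → ℝ) (c : V → S) :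
    Sym2 S → ℝ :=
  fun z => if PiCount c z < 2 * ECount A c z then PiCount c z else 0

lemma sum_abs_split {V : Type*} (A : V → V → ℝ)
    (h01 : ∀ i j : V, A i j = 0 ∨ A i j = 1) (Fz : Finset (V × V)) (t : ℝ) :
    ∑ p ∈ Fz, |A p.1 p.2 - t|
      = ((Fz.filter (fun p => A p.1 p.2 = 1)).card : ℝ) * |1 - t|
        + ((Fz.filter (fun p => ¬ A p.1 p.2 = 1)).card : ℝ) * |t| := by
  classical
  rw [← Finset.sum_filter_add_sum_filter_not Fz (fun p => A p.1 p.2 = 1)]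
  congr 1
  · rw [Finset.sum_congr rfl (fun p hp => by
      rw [(Finset.mem_filter.mp hp).2]), Finset.sum_const, nsmul_eq_mul]
  · rw [Finset.sum_congr rfl (fun p hp => ?_), Finset.sum_const, nsmul_eq_mul]
    have h := (Finset.mem_filter.mp hp).2
    rcases h01 p.1 p.2 with h0 | h0
    · rw [h0]; simp
    · exact absurd h0 h

lemma key_min (e m t : ℝ) (he : 0 ≤ e) (hm : 0 ≤ m) :
    min e m ≤ e * |1 - t| + m * |t| := by
  have h1 : 1 ≤ |1 - t| + |t| := by
    have := abs_add_le (1 - t) t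
    simpa using this
  have ht := abs_nonneg t
  have hs := abs_nonneg (1 - t)
  rcases le_total e m with h | h
  · rw [min_eq_left h]; nlinarith
  · rw [min_eq_right h]; nlinarith

/-- (Theorem 1, existence form.) There is a weight function supported on `P`
minimizing `RE₁` over all weight functions supported on `P` whose reconstructed
subedge weights `w_z/Π_z` all lie in `{0, 1}`: concretely, the weight function
with `w_z = Π_z` if `Π_z < 2·E_z` and `w_z = 0` otherwise. -/
theorem stmt_9 {V S : Type*} [Fintype V] [Fintype S]
    (A : V → V → ℝ) (hSym : ∀ i j : V, A i j = A j i) (hDiag : ∀ i : V, A i i = 0)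
    (h01 : ∀ i j : V, A i j = 0 ∨ A i j = 1)
    (c : V → S) (hc : Function.Surjective c)
    (P : Finset (Sym2 S)) (hP : ∀ z ∈ P, 1 ≤ PiCount c z) :
    (∀ z ∈ P, optW A c z / PiCount c z = 0 ∨ optW A c z / PiCount c z = 1) ∧
    (∀ w : Sym2 S → ℝ, RE1 A c P (optW A c) ≤ RE1 A c P w) := by
  classical
  have hPine : ∀ z ∈ P, PiCount c z ≠ 0 := fun z hz => by
    have := hP z hz; linarith
  constructor
  · intro z hz
    unfold optW
    split_ifs with h
    · right; exact div_self (hPine z hz)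
    · left; simp
  · intro w
    unfold RE1
    have hmain : ∑ p ∈ Finset.univ.offDiag, |A p.1 p.2 - reconW c P (optW A c) p.1 p.2|
        ≤ ∑ p ∈ Finset.univ.offDiag, |A p.1 p.2 - reconW c P w p.1 p.2| := by
      have hfib : ∀ (w' : Sym2 S → ℝ),
          ∑ p ∈ Finset.univ.offDiag, |A p.1 p.2 - reconW c P w' p.1 p.2|
          = ∑ z : Sym2 S, ∑ p ∈ Finset.univ.offDiag.filter
              (fun p : V × V => Sym2.mk (c p.1) (c p.2) = z),
              |A p.1 p.2 - reconW c P w' p.1 p.2| := by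
        intro w'
        exact (Finset.sum_fiberwise_of_maps_to (fun p _ => Finset.mem_univ _) _).symm
      rw [hfib, hfib]
      apply Finset.sum_le_sum
      intro z _
      set Fz := Finset.univ.offDiag.filter
        (fun p : V × V => Sym2.mk (c p.1) (c p.2) = z) with hFz
      have hrec : ∀ (w' : Sym2 S → ℝ) (p : V × V), p ∈ Fz →
          reconW c P w' p.1 p.2
            = if z ∈ P then w' z / PiCount c z else 0 := by
        intro w' p hp
        obtain ⟨hpd, hpz⟩ := Finset.mem_filter.mp hp
        have hne : p.1 ≠ p.2 := (Finset.mem_offDiag.mp hpd).2.2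
        unfold reconW
        rw [hpz]
        by_cases hzP : z ∈ P <;> simp [hzP, hne]
      by_cases hzP : z ∈ P
      · have hrw : ∀ (w' : Sym2 S → ℝ),
            ∑ p ∈ Fz, |A p.1 p.2 - reconW c P w' p.1 p.2|
            = ((Fz.filter (fun p => A p.1 p.2 = 1)).card : ℝ) * |1 - w' z / PiCount c z|
              + ((Fz.filter (fun p => ¬ A p.1 p.2 = 1)).card : ℝ) * |w' z / PiCount c z| := by
          intro w'
          rw [Finset.sum_congr rfl (fun p hp => by rw [hrec w' p hp, if_pos hzP])]
          exact sum_abs_split A h01 Fz _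
        rw [hrw, hrw]
        set e : ℝ := ((Fz.filter (fun p => A p.1 p.2 = 1)).card : ℝ) with he
        set m : ℝ := ((Fz.filter (fun p => ¬ A p.1 p.2 = 1)).card : ℝ) with hm
        have he0 : 0 ≤ e := Nat.cast_nonneg _
        have hm0 : 0 ≤ m := Nat.cast_nonneg _
        have hE : ECount A c z = e / 2 := by
          unfold ECount
          rw [he, hFz, Finset.filter_filter]
        have hPi : PiCount c z = (e + m) / 2 := by
          unfold PiCount
          rw [he, hm, hFz]
          rw [← Nat.cast_add,
            Finset.card_filter_add_card_filter_not (p := fun p : V × V => A p.1 p.2 = 1)]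
        have hkey := key_min e m (w z / PiCount c z) he0 hm0
        unfold optW
        split_ifs with h
        · -- t* = 1
          rw [div_self (hPine z hzP)]
          have hme : m < e := by
            rw [hPi, hE] at h; linarith
          have : min e m = m := min_eq_right hme.le
          rw [this] at hkey
          simpa using hkey
        · rw [zero_div]
          have hem : e ≤ m := by
            rw [hPi, hE] at h
            push_neg at h
            linarith
          have : min e m = e := min_eq_left hem
          rw [this] at hkey
          simpa using hkey
      · apply le_of_eq
        apply Finset.sum_congr rfl
        intro p hp
        rw [hrec _ p hp, hrec _ p hp, if_neg hzP, if_neg hzP]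
    linarith
end

section
/- (Theorem 1, uniqueness form.) Suppose Π_{XY} ≠ 2·E_{XY} for every superedge {X,Y} ∈ P. Then every weight function ω supported on P that minimizes RE_1 over all weight functions supported on P satisfies, for every superedge {X,Y} ∈ P, ω_{XY}/Π_{XY} = 1 if Π_{XY} < 2·E_{XY} and ω_{XY}/Π_{XY} = 0 if Π_{XY} > 2·E_{XY}; in particular all reconstructed subedge weights of a minimizer are 0 or 1, exactly as in the unweighted summarization model. -/
open scoped Classical

/-- (Theorem 1, uniqueness form.) Suppose `Π_z ≠ 2·E_z` for every superedge
`z ∈ P`.  Then every weight function `w` supported on `P` minimizing `RE₁`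
over all weight functions supported on `P` satisfies, for every `z ∈ P`,
`w_z/Π_z = 1` if `Π_z < 2·E_z` and `w_z/Π_z = 0` if `Π_z > 2·E_z`. -/
theorem stmt_10 {V S : Type*} [Fintype V] [Fintype S]
    (A : V → V → ℝ) (hSym : ∀ i j : V, A i j = A j i) (hDiag : ∀ i : V, A i i = 0)
    (h01 : ∀ i j : V, A i j = 0 ∨ A i j = 1)
    (c : V → S) (hc : Function.Surjective c)
    (P : Finset (Sym2 S)) (hP : ∀ z ∈ P, 1 ≤ PiCount c z)
    (hne : ∀ z ∈ P, PiCount c z ≠ 2 * ECount A c z)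
    (w : Sym2 S → ℝ) (hmin : ∀ w' : Sym2 S → ℝ, RE1 A c P w ≤ RE1 A c P w') :
    ∀ z ∈ P, (PiCount c z < 2 * ECount A c z → w z / PiCount c z = 1) ∧
      (2 * ECount A c z < PiCount c z → w z / PiCount c z = 0) := by

  intro z hz
  classical
  set F : Finset (V × V) :=
    Finset.univ.offDiag.filter (fun p : V × V => Sym2.mk (c p.1) (c p.2) = z) with hFdef
  set G : Finset (V × V) := F.filter (fun p => A p.1 p.2 = 1) with hGdef
  have hPi : PiCount c z = (F.card : ℝ) / 2 := rfl
  have hEeq : ECount A c z = (G.card : ℝ) / 2 := by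
    unfold ECount
    rw [hGdef, hFdef, Finset.filter_filter]
  have hGF : G.card ≤ F.card := by
    rw [hGdef]; exact Finset.card_filter_le _ _
  have hPipos : (0:ℝ) < PiCount c z := lt_of_lt_of_le one_pos (hP z hz)
  -- key computation of the error restricted to pairs mapping to z
  have key : ∀ t : ℝ, ∑ p ∈ F, |A p.1 p.2 - t|
      = (G.card : ℝ) * |1 - t| + ((F.card : ℝ) - G.card) * |t| := by
    intro t
    rw [← Finset.sum_filter_add_sum_filter_not F (fun p => A p.1 p.2 = 1)]
    have h1 : ∑ p ∈ F.filter (fun p => A p.1 p.2 = 1), |A p.1 p.2 - t|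
        = (G.card : ℝ) * |1 - t| := by
      rw [hGdef, Finset.sum_congr rfl (fun p hp => ?_), Finset.sum_const, nsmul_eq_mul]
      rw [(Finset.mem_filter.mp hp).2]
    have h2 : ∑ p ∈ F.filter (fun p => ¬ A p.1 p.2 = 1), |A p.1 p.2 - t|
        = ((F.card : ℝ) - G.card) * |t| := by
      have hc2 : (F.filter (fun p => ¬ A p.1 p.2 = 1)).card = F.card - G.card := by
        rw [hGdef]
        have := Finset.card_filter_add_card_filter_not
          (s := F) (p := fun p => A p.1 p.2 = 1)
        omega
      rw [Finset.sum_congr rfl (fun p hp => ?_), Finset.sum_const, nsmul_eq_mul, hc2,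
        Nat.cast_sub hGF]
      have hp' := (Finset.mem_filter.mp hp).2
      have h0 : A p.1 p.2 = 0 := (h01 p.1 p.2).resolve_right hp'
      rw [h0, zero_sub, abs_neg]
    rw [h1, h2]
  -- comparison: for any v, w is at least as good as updating w at z to v
  have comp : ∀ v : ℝ, ∑ p ∈ F, |A p.1 p.2 - w z / PiCount c z|
      ≤ ∑ p ∈ F, |A p.1 p.2 - v / PiCount c z| := by
    intro v
    have h := hmin (Function.update w z v)
    unfold RE1 at h
    rw [div_le_div_iff_of_pos_right two_pos] at h
    rw [← Finset.sum_filter_add_sum_filter_not Finset.univ.offDiag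
        (fun p : V × V => Sym2.mk (c p.1) (c p.2) = z),
      ← Finset.sum_filter_add_sum_filter_not Finset.univ.offDiag
        (fun p : V × V => Sym2.mk (c p.1) (c p.2) = z)] at h
    have hnot : ∑ p ∈ Finset.univ.offDiag.filter
          (fun p : V × V => ¬ Sym2.mk (c p.1) (c p.2) = z),
          |A p.1 p.2 - reconW c P (Function.update w z v) p.1 p.2|
        = ∑ p ∈ Finset.univ.offDiag.filter
          (fun p : V × V => ¬ Sym2.mk (c p.1) (c p.2) = z),
          |A p.1 p.2 - reconW c P w p.1 p.2| := by
      refine Finset.sum_congr rfl (fun p hp => ?_)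
      have hpne := (Finset.mem_filter.mp hp).2
      unfold reconW
      rw [Function.update_of_ne hpne]
    rw [hnot] at h
    have hon : ∀ (u : Sym2 S → ℝ), ∑ p ∈ F, |A p.1 p.2 - reconW c P u p.1 p.2|
        = ∑ p ∈ F, |A p.1 p.2 - u z / PiCount c z| := by
      intro u
      refine Finset.sum_congr rfl (fun p hp => ?_)
      obtain ⟨hpd, hpz⟩ := Finset.mem_filter.mp hp
      have hij : p.1 ≠ p.2 := (Finset.mem_offDiag.mp hpd).2.2
      unfold reconW
      rw [if_pos ⟨hij, hpz ▸ hz⟩, hpz]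
    have h' := h
    rw [hon w, hon (Function.update w z v), Function.update_self] at h'
    exact le_of_add_le_add_right h'
  set x : ℝ := w z / PiCount c z with hx
  have habs : (1:ℝ) ≤ |x| + |1 - x| := by
    have := abs_add_le x (1 - x)
    simpa using this
  constructor
  · intro hlt
    have h1 := comp (PiCount c z)
    rw [div_self (ne_of_gt hPipos)] at h1
    rw [key, key] at h1
    have hc1 : (F.card : ℝ) / 2 < 2 * ((G.card : ℝ) / 2) := by
      rw [← hPi, ← hEeq]; exact hlt
    have hGFr : (G.card : ℝ) ≤ F.card := by exact_mod_cast hGF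
    simp only [sub_self, abs_zero, abs_one, mul_zero, mul_one, zero_add] at h1
    have h3 : (0:ℝ) ≤ |1 - x| := abs_nonneg _
    have h5 : ((F.card:ℝ) - G.card) * (1 - |1 - x|) ≤ ((F.card:ℝ) - G.card) * |x| :=
      mul_le_mul_of_nonneg_left (by linarith) (by linarith)
    have h7 : (2*(G.card:ℝ) - F.card) * |1 - x| ≤ 0 := by linarith
    have h2 : |1 - x| = 0 := by nlinarith
    have : 1 - x = 0 := abs_eq_zero.mp h2
    linarith
  · intro hlt
    have h1 := comp 0
    rw [zero_div, key, key] at h1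
    have hc1 : 2 * ((G.card : ℝ) / 2) < (F.card : ℝ) / 2 := by
      rw [← hPi, ← hEeq]; exact hlt
    have hGr : (0:ℝ) ≤ (G.card : ℝ) := Nat.cast_nonneg _
    simp only [sub_zero, abs_zero, abs_one, mul_zero, mul_one, add_zero] at h1
    have h4 : (0:ℝ) ≤ |x| := abs_nonneg _
    have h5 : (G.card:ℝ) * (1 - |x|) ≤ (G.card:ℝ) * |1 - x| :=
      mul_le_mul_of_nonneg_left (by linarith) (by linarith)
    have h7 : ((F.card:ℝ) - 2*G.card) * |x| ≤ 0 := by linarith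
    have h2 : |x| = 0 := by nlinarith
    have : x = 0 := abs_eq_zero.mp h2
    linarith
end
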